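/- Let a, b, c, x be real quaternions with a·x + x·b = c, and set d := a^2 + b·(star b) + a·(b + star b), where star denotes quaternion conjugation. Then d·x = a·c + c·star b; in particular, if d ≠ 0 then x = d⁻¹·(a·c + c·star b), so the solution of the Sylvester equation is unique. -/
import Mathlib


theorem quaternion_sylvester_uniqueness (a b c x : Quaternion ℝ)
    (hx : a * x + x * b = c) :
    (a ^ 2 + b * star b + a * (b + star b)) * x = a * c + c * star b ∧
      (a ^ 2 + b * star b + a * (b + star b) ≠ 0 →
        x = (a ^ 2 + b * star b + a * (b + star b))⁻¹ * (a * c + c * star b)) := by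
  have h1 : (b * star b) * x = x * (b * star b) := by
    rw [Quaternion.mul_star_eq_coe]; exact (Quaternion.coe_commute _ x).eq
  have h2 : (b + star b) * x = x * (b + star b) := by
    rw [Quaternion.self_add_star']; exact (Quaternion.coe_commute _ x).eq
  have key : (a ^ 2 + b * star b + a * (b + star b)) * x = a * c + c * star b := by
    rw [← hx, pow_two, add_mul, add_mul, h1, mul_assoc a (b + star b) x, h2]
    noncomm_ring
  exact ⟨key, fun hd => by rw [← key, ← mul_assoc, inv_mul_cancel₀ hd, one_mul]⟩
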